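/- Let A : Matrix (Fin n) (Fin n) ℂ, let ψ, η : Matrix (Fin n) (Fin n) ℂ →ₗ[ℂ] Matrix (Fin n) (Fin n) ℂ with ψ completely positive and η co-completely positive, and suppose A * X * Aᴴ = ψ X + η X for all X. For i : Fin n let a i : Fin n → ℂ denote the i-th column of A (i.e. a i = fun r => A r i). Then for all i, j : Fin n: (a) if a i and a j are linearly dependent over ℂ, then there exists z : ℂ with η (E i j) = z • Matrix.vecMulVec (a i) (star (a i)); (b) if a i and a j are linearly independent over ℂ, then η (E i j) = 0. -/

import Mathlib

open Matrix ComplexOrder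

/-- `Φ` is completely positive: every blockwise application of `Φ` to a positive semidefinite
matrix on `ℂ^m ⊗ ℂ^n` yields a positive semidefinite matrix. -/
def IsCP (n : ℕ) (Φ : Matrix (Fin n) (Fin n) ℂ →ₗ[ℂ] Matrix (Fin n) (Fin n) ℂ) : Prop :=
  ∀ (m : ℕ) (A : Matrix (Fin m × Fin n) (Fin m × Fin n) ℂ), A.PosSemidef →
    (Matrix.of fun p q : Fin m × Fin n =>
      Φ (Matrix.of fun i' j' => A (p.1, i') (q.1, j')) p.2 q.2).PosSemidef

/-- Transposition (in the standard basis) as a linear map on matrices. -/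
def transpLM (n : ℕ) : Matrix (Fin n) (Fin n) ℂ →ₗ[ℂ] Matrix (Fin n) (Fin n) ℂ where
  toFun X := Xᵀ
  map_add' X Y := by simp
  map_smul' c X := by simp

/-- `Φ` is co-completely positive: `X ↦ Φ Xᵀ` is completely positive. -/
def IsCoCP (n : ℕ) (Φ : Matrix (Fin n) (Fin n) ℂ →ₗ[ℂ] Matrix (Fin n) (Fin n) ℂ) : Prop :=
  IsCP n (Φ ∘ₗ transpLM n)

lemma dot_conj {m : Type*} [Fintype m] (x y : m → ℂ) :
    star x ⬝ᵥ y = star (star y ⬝ᵥ x) := by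
  simp [dotProduct, Finset.sum_comm, mul_comm]

lemma vecMulVec_star_mulVec {m : Type*} [Fintype m] (u v y : m → ℂ) :
    vecMulVec u (star v) *ᵥ y = (star v ⬝ᵥ y) • u := by
  funext k
  simp only [mulVec, dotProduct, vecMulVec_apply, Pi.smul_apply, smul_eq_mul, Pi.star_apply,
    Finset.sum_mul]
  exact Finset.sum_congr rfl fun l _ => by ring

lemma posSemidef_vecMulVec_star {m : Type*} [Fintype m] (v : m → ℂ) :
    (vecMulVec v (star v)).PosSemidef := by
  rw [vecMulVec_eq (Fin 1), ← conjTranspose_replicateCol]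
  exact posSemidef_self_mul_conjTranspose _

lemma eq_of_mulVec_eq {m : Type*} [Fintype m] [DecidableEq m]
    (M N : Matrix m m ℂ) (h : ∀ x, M *ᵥ x = N *ᵥ x) : M = N := by
  ext k l
  have := congrFun (h (Pi.single l 1)) k
  simpa [mulVec_single] using this

lemma dot_all_zero {m : Type*} [Fintype m] (w : m → ℂ)
    (h : ∀ y, star y ⬝ᵥ w = 0) : w = 0 :=
  dotProduct_star_self_eq_zero.mp (h w)

lemma sub_proj_orth {m : Type*} [Fintype m] (u y : m → ℂ) :
    star (y - ((star u ⬝ᵥ y) / (star u ⬝ᵥ u)) • u) ⬝ᵥ u = 0 := by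
  rcases eq_or_ne u 0 with rfl | hu
  · simp
  have hN : star u ⬝ᵥ u ≠ 0 := fun h => hu (dotProduct_star_self_eq_zero.mp h)
  have hNc : star (star u ⬝ᵥ u) = star u ⬝ᵥ u := by rw [← dot_conj]
  simp only [star_sub, sub_dotProduct, star_smul, smul_dotProduct, smul_eq_mul]
  rw [star_div₀, hNc, div_mul_cancel₀ _ hN, dot_conj y u, sub_self]

lemma span_of_orth {m : Type*} [Fintype m] (u w : m → ℂ)
    (h : ∀ x : m → ℂ, star x ⬝ᵥ u = 0 → star x ⬝ᵥ w = 0) :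
    w = ((star u ⬝ᵥ w) / (star u ⬝ᵥ u)) • u := by
  rcases eq_or_ne u 0 with rfl | hu
  · have : w = 0 := dot_all_zero w fun y => h y (by simp)
    simp [this]
  set c := (star u ⬝ᵥ w) / (star u ⬝ᵥ u) with hc
  set x := w - c • u with hx
  have hxu : star x ⬝ᵥ u = 0 := sub_proj_orth u w
  have hxw : star x ⬝ᵥ w = 0 := h x hxu
  have hxx : star x ⬝ᵥ x = 0 := by
    rw [hx]
    have : star (w - c • u) ⬝ᵥ (w - c • u)
        = star (w - c • u) ⬝ᵥ w - c * (star (w - c • u) ⬝ᵥ u) := by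
      simp [dotProduct_sub, dotProduct_smul, smul_eq_mul]
    rw [this, ← hx, hxw, hxu, mul_zero, sub_zero]
  have : x = 0 := dotProduct_star_self_eq_zero.mp hxx
  have := sub_eq_zero.mp (hx ▸ this)
  linear_combination (norm := module) this

lemma endgame {n : ℕ} (u v : Fin n → ℂ) (B : Matrix (Fin n) (Fin n) ℂ)
    (P1 : ∀ x : Fin n → ℂ, star x ⬝ᵥ u = 0 → B *ᵥ x = 0)
    (P2 : ∀ x : Fin n → ℂ, star x ⬝ᵥ u = 0 → ∀ y, star x ⬝ᵥ (B *ᵥ y) = 0)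
    (P3 : ∀ y : Fin n → ℂ, star y ⬝ᵥ v = 0 → ∀ x, star y ⬝ᵥ (B *ᵥ x) = 0) :
    (∃ z : ℂ, B = z • vecMulVec u (star u)) ∧
    (LinearIndependent ℂ ![u, v] → B = 0) := by
  have hN : ∀ w : Fin n → ℂ, w ≠ 0 → star w ⬝ᵥ w ≠ 0 :=
    fun w hw h => hw (dotProduct_star_self_eq_zero.mp h)
  -- part 1
  have part1 : ∃ z : ℂ, B = z • vecMulVec u (star u) := by
    rcases eq_or_ne u 0 with rfl | hu
    · refine ⟨0, eq_of_mulVec_eq _ _ fun x => ?_⟩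
      rw [P1 x (by simp)]
      simp
    set N := star u ⬝ᵥ u with hNdef
    have hN0 : N ≠ 0 := hN u hu
    have hBu : B *ᵥ u = ((star u ⬝ᵥ (B *ᵥ u)) / N) • u :=
      span_of_orth u (B *ᵥ u) (fun x hx => P2 x hx u)
    set γ := star u ⬝ᵥ (B *ᵥ u) with hγdef
    have hdecomp : ∀ y, B *ᵥ y = ((star u ⬝ᵥ y) / N) • (B *ᵥ u) := by
      intro y
      have h0 : B *ᵥ (y - ((star u ⬝ᵥ y) / N) • u) = 0 := P1 _ (sub_proj_orth u y)
      rw [mulVec_sub, mulVec_smul, sub_eq_zero] at h0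
      exact h0
    refine ⟨γ / N / N, eq_of_mulVec_eq _ _ fun y => ?_⟩
    rw [hdecomp y, hBu, smul_mulVec, vecMulVec_star_mulVec, smul_smul, smul_smul]
    congr 1
    ring
  refine ⟨part1, fun hind => ?_⟩
  obtain ⟨z, hz⟩ := part1
  rw [linearIndependent_fin2] at hind
  obtain ⟨hv, hvu⟩ := hind
  have hu : u ≠ 0 := fun h => hvu 0 (by simp [h])
  set Nv := star v ⬝ᵥ v with hNv
  set y₀ := u - ((star v ⬝ᵥ u) / Nv) • v with hy₀
  have hy₀v : star y₀ ⬝ᵥ v = 0 := sub_proj_orth v u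
  have hy₀0 : y₀ ≠ 0 := by
    intro h
    exact hvu ((star v ⬝ᵥ u) / Nv) (by rw [eq_comm, ← sub_eq_zero]; exact h)
  have hy₀u : star y₀ ⬝ᵥ u ≠ 0 := by
    have h2 : star y₀ ⬝ᵥ y₀ = star y₀ ⬝ᵥ u - ((star v ⬝ᵥ u) / Nv) * (star y₀ ⬝ᵥ v) := by
      nth_rewrite 2 [hy₀]
      simp [dotProduct_sub, dotProduct_smul, smul_eq_mul]
    intro h
    apply hN y₀ hy₀0
    rw [h2, hy₀v, mul_zero, sub_zero]
    exact h
  have key : star y₀ ⬝ᵥ (B *ᵥ u) = 0 := P3 y₀ hy₀v u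
  rw [hz, smul_mulVec, vecMulVec_star_mulVec, dotProduct_smul, dotProduct_smul] at key
  have hz0 : z = 0 := by
    have hNu : star u ⬝ᵥ u ≠ 0 := hN u hu
    simp only [smul_eq_mul] at key
    rcases mul_eq_zero.mp key with h | h
    · exact h
    rcases mul_eq_zero.mp h with h' | h'
    · exact absurd h' hNu
    · exact absurd h' hy₀u
  rw [hz, hz0, zero_smul]

def emb {n : ℕ} (s : Fin n) (x : Fin n → ℂ) : Fin n × Fin n → ℂ :=
  fun p => if p.1 = s then x p.2 else 0

lemma emb_dot {n : ℕ} (F : Fin n → Fin n → Matrix (Fin n) (Fin n) ℂ) (s t : Fin n)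
    (x y : Fin n → ℂ) :
    star (emb s x) ⬝ᵥ ((Matrix.of fun p q : Fin n × Fin n => F p.1 q.1 p.2 q.2) *ᵥ emb t y)
      = star x ⬝ᵥ (F s t *ᵥ y) := by
  classical
  simp only [dotProduct, mulVec, emb, Matrix.of_apply, Pi.star_apply, Fintype.sum_prod_type,
    dotProduct]
  simp [apply_ite, mul_ite, ite_mul, zero_mul, mul_zero, Finset.sum_ite_irrel,
    Finset.sum_const_zero, Finset.sum_ite_eq, Finset.sum_ite_eq', Finset.mul_sum]

lemma herm_orth {m : Type*} [Fintype m] {M : Matrix m m ℂ} (h : M.IsHermitian)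
    {a : m → ℂ} (ha : M *ᵥ a = 0) (g : m → ℂ) : star a ⬝ᵥ (M *ᵥ g) = 0 := by
  have h1 : star a ᵥ* M = 0 := by
    conv_lhs => rw [← h]
    rw [← star_mulVec, ha, star_zero]
  rw [dotProduct_mulVec, h1, zero_dotProduct]

lemma choiw_block {n : ℕ} (s t : Fin n) :
    (Matrix.of fun k l : Fin n =>
      vecMulVec (fun p : Fin n × Fin n => if p.1 = p.2 then (1:ℂ) else 0)
        (star fun p : Fin n × Fin n => if p.1 = p.2 then (1:ℂ) else 0) ((s, k)) ((t, l)))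
      = single s t (1:ℂ) := by
  ext k l
  by_cases h1 : s = k <;> by_cases h2 : t = l <;>
    simp [vecMulVec_apply, single, h1, h2]

lemma stdBasis_transp {n : ℕ} (s t : Fin n) :
    (single s t (1:ℂ))ᵀ = single t s 1 := by
  ext k l
  simp [single, and_comm]

lemma AEAH {n : ℕ} (A : Matrix (Fin n) (Fin n) ℂ) (s t : Fin n) :
    A * single s t 1 * Aᴴ
      = vecMulVec (fun r => A r s) (star fun r => A r t) := by
  ext k l
  simp [mul_apply, single, conjTranspose_apply, vecMulVec_apply, ite_and,
    mul_ite, ite_mul, zero_mul, mul_zero, Finset.sum_ite_irrel, Finset.sum_const_zero,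
    Finset.sum_ite_eq, Finset.sum_ite_eq']

/-- Key lemma on the structure of the Choi matrix of the co-CP summand `η` of a decomposition
`A X Aᴴ = ψ X + η X` of an extreme CP map: with `a i` the `i`-th column of `A`,
if `a i` and `a j` are linearly dependent then `η (E i j)` is a multiple of `|a i⟩⟨a i|`,
and if they are linearly independent then `η (E i j) = 0`. -/
theorem choi_block_structure (n : ℕ) (A : Matrix (Fin n) (Fin n) ℂ)
    (ψ η : Matrix (Fin n) (Fin n) ℂ →ₗ[ℂ] Matrix (Fin n) (Fin n) ℂ)
    (hψ : IsCP n ψ) (hη : IsCoCP n η)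
    (hsum : ∀ X : Matrix (Fin n) (Fin n) ℂ, A * X * Aᴴ = ψ X + η X)
    (i j : Fin n) :
    (¬ LinearIndependent ℂ ![(fun r => A r i : Fin n → ℂ), (fun r => A r j : Fin n → ℂ)] →
      ∃ z : ℂ, η (Matrix.single i j 1)
        = z • Matrix.vecMulVec (fun r => A r i) (star (fun r => A r i))) ∧
    (LinearIndependent ℂ ![(fun r => A r i : Fin n → ℂ), (fun r => A r j : Fin n → ℂ)] →
      η (Matrix.single i j 1) = 0) := by
  classical
  set u : Fin n → ℂ := fun r => A r i with hu
  set v : Fin n → ℂ := fun r => A r j with hv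
  set B : Matrix (Fin n) (Fin n) ℂ := η (Matrix.single i j 1) with hB
  have hψeq : ∀ s t : Fin n, ψ (single s t 1)
      = vecMulVec (fun r => A r s) (star fun r => A r t) - η (single s t 1) := by
    intro s t
    have h := (hsum (single s t 1)).symm
    rw [AEAH] at h
    exact eq_sub_of_add_eq h
  have hMpsd : (vecMulVec (fun p : Fin n × Fin n => if p.1 = p.2 then (1:ℂ) else 0)
      (star fun p : Fin n × Fin n => if p.1 = p.2 then (1:ℂ) else 0)).PosSemidef :=
    posSemidef_vecMulVec_star _
  set Smat : Matrix (Fin n × Fin n) (Fin n × Fin n) ℂ :=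
    Matrix.of fun p q : Fin n × Fin n => ψ (single p.1 q.1 1) p.2 q.2 with hSmat
  set Tmat : Matrix (Fin n × Fin n) (Fin n × Fin n) ℂ :=
    Matrix.of fun p q : Fin n × Fin n => η (single q.1 p.1 1) p.2 q.2 with hTmat
  have hS : Smat.PosSemidef := by
    have h := hψ n _ hMpsd
    have e : (Matrix.of fun p q : Fin n × Fin n =>
        ψ (Matrix.of fun k l =>
          vecMulVec (fun p : Fin n × Fin n => if p.1 = p.2 then (1:ℂ) else 0)
            (star fun p : Fin n × Fin n => if p.1 = p.2 then (1:ℂ) else 0) (p.1, k) (q.1, l))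
          p.2 q.2) = Smat := by
      ext p q
      rw [hSmat]
      simp only [Matrix.of_apply]
      rw [choiw_block]
    rwa [e] at h
  have hT : Tmat.PosSemidef := by
    have h := hη n _ hMpsd
    have e : (Matrix.of fun p q : Fin n × Fin n =>
        (η ∘ₗ transpLM n) (Matrix.of fun k l =>
          vecMulVec (fun p : Fin n × Fin n => if p.1 = p.2 then (1:ℂ) else 0)
            (star fun p : Fin n × Fin n => if p.1 = p.2 then (1:ℂ) else 0) (p.1, k) (q.1, l))
          p.2 q.2) = Tmat := by
      ext p q
      rw [hTmat]
      simp only [Matrix.of_apply, LinearMap.comp_apply]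
      rw [choiw_block]
      show η ((single p.1 q.1 1)ᵀ) p.2 q.2 = _
      rw [stdBasis_transp]
    rwa [e] at h
  have diag : ∀ (s : Fin n) (x : Fin n → ℂ), star x ⬝ᵥ (fun r => A r s) = 0 →
      Smat *ᵥ emb s x = 0 ∧ Tmat *ᵥ emb s x = 0 := by
    intro s x hx
    have hq2 := emb_dot (fun s t => η (single t s 1)) s s x x
    rw [← hTmat] at hq2
    have hq1 := emb_dot (fun s t => ψ (single s t 1)) s s x x
    rw [← hSmat] at hq1
    rw [hψeq s s, sub_mulVec, dotProduct_sub, vecMulVec_star_mulVec,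
      dotProduct_smul, smul_eq_mul, hx, mul_zero, zero_sub] at hq1
    have hTq : (0:ℂ) ≤ star x ⬝ᵥ (η (single s s 1) *ᵥ x) := by
      have := hT.dotProduct_mulVec_nonneg (emb s x); rwa [hq2] at this
    have hSq : (0:ℂ) ≤ - (star x ⬝ᵥ (η (single s s 1) *ᵥ x)) := by
      have := hS.dotProduct_mulVec_nonneg (emb s x); rwa [hq1] at this
    have hzero : star x ⬝ᵥ (η (single s s 1) *ᵥ x) = 0 :=
      le_antisymm (neg_nonneg.mp hSq) hTq
    constructor
    · exact (hS.dotProduct_mulVec_zero_iff (emb s x)).mp (by rw [hq1, hzero, neg_zero])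
    · exact (hT.dotProduct_mulVec_zero_iff (emb s x)).mp (by rw [hq2, hzero])
  have P1 : ∀ x : Fin n → ℂ, star x ⬝ᵥ u = 0 → B *ᵥ x = 0 := by
    intro x hx
    have hker := (diag i x hx).2
    apply dot_all_zero
    intro y
    have h := emb_dot (fun s t => η (single t s 1)) j i y x
    rw [← hTmat, ← hB] at h
    rw [← h, hker, dotProduct_zero]
  have P2 : ∀ x : Fin n → ℂ, star x ⬝ᵥ u = 0 → ∀ y, star x ⬝ᵥ (B *ᵥ y) = 0 := by
    intro x hx y
    have hker := (diag i x hx).1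
    have h0 : star (emb i x) ⬝ᵥ (Smat *ᵥ emb j y) = 0 := herm_orth hS.1 hker _
    have h := emb_dot (fun s t => ψ (single s t 1)) i j x y
    rw [← hSmat] at h
    rw [h, hψeq i j, sub_mulVec, dotProduct_sub, vecMulVec_star_mulVec,
      dotProduct_smul, smul_eq_mul, hx, mul_zero, zero_sub, neg_eq_zero, ← hB] at h0
    exact h0
  have P3 : ∀ y : Fin n → ℂ, star y ⬝ᵥ v = 0 → ∀ x, star y ⬝ᵥ (B *ᵥ x) = 0 := by
    intro y hy x
    have hker := (diag j y hy).2
    have h0 : star (emb j y) ⬝ᵥ (Tmat *ᵥ emb i x) = 0 := herm_orth hT.1 hker _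
    have h := emb_dot (fun s t => η (single t s 1)) j i y x
    rw [← hTmat, ← hB] at h
    rw [h] at h0
    exact h0
  have hend := endgame u v B P1 P2 P3
  exact ⟨fun _ => hend.1, hend.2⟩
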